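/- With C, F, N_F, p as above, the following are equivalent: (i) p(F) equals the closure F̄ of p(F) under composition with isomorphisms of C/[N_F]; (ii) p⁻¹(F̄) = F; (iii) p⁻¹(Iso(C/[N_F])) ⊆ F; (iv) every split monomorphism f in C whose image p(f) is an isomorphism in C/[N_F] belongs to F; (v) every split epimorphism f in C whose image p(f) is an isomorphism belongs to F. -/

import Mathlib

set_option linter.unusedSectionVars false
set_option maxHeartbeats 1000000


open CategoryTheory CategoryTheory.Limits ZeroObject

universe v u

variable {C : Type u} [Category.{v} C] [Preadditive C] [HasZeroObject C]
  [HasFiniteBiproducts C] [HasBinaryBiproducts C]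

/-- A morphism factors through an object of the class `N`. -/
def FactorsThrough (N : Set C) {X Y : C} (f : X ⟶ Y) : Prop :=
  ∃ Z ∈ N, ∃ (u : X ⟶ Z) (v : Z ⟶ Y), f = u ≫ v

/-- The hom relation identifying two morphisms whose difference lies in the
ideal `[N]` of morphisms factoring through an object of `N`. -/
def idealRel (N : Set C) : HomRel C := fun _ _ f g => FactorsThrough N (f - g)

/-- The full subcategory `N_F` of objects `N` such that both `N ⟶ 0` and
`0 ⟶ N` belong to `F`. -/
def NF (F : MorphismProperty C) : Set C :=
  {N : C | F (0 : N ⟶ (0 : C)) ∧ F (0 : (0 : C) ⟶ N)}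

/-- Condition (M0): `F` contains all isomorphisms, is closed under composition
and closed under finite direct sums of morphisms. -/
def M0 (F : MorphismProperty C) : Prop :=
  (∀ {X Y : C} (f : X ⟶ Y), IsIso f → F f) ∧
  (∀ {X Y Z : C} (f : X ⟶ Y) (g : Y ⟶ Z), F f → F g → F (f ≫ g)) ∧
  (∀ {X₁ Y₁ X₂ Y₂ : C} (f₁ : X₁ ⟶ Y₁) (f₂ : X₂ ⟶ Y₂), F f₁ → F f₂ →
    F (biprod.map f₁ f₂))

/-- The class `F̄` of morphisms of the ideal quotient `C/[N_F]` obtained from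
the image of `F` by closing under pre- and post-composition with isomorphisms. -/
def Fbar (F : MorphismProperty C) :
    MorphismProperty (CategoryTheory.Quotient (idealRel (NF F))) :=
  fun X Y h => ∃ (A B : C)
    (e₁ : X ⟶ (CategoryTheory.Quotient.functor (idealRel (NF F))).obj A)
    (e₂ : (CategoryTheory.Quotient.functor (idealRel (NF F))).obj B ⟶ Y)
    (f : A ⟶ B), IsIso e₁ ∧ IsIso e₂ ∧ F f ∧
      h = e₁ ≫ (CategoryTheory.Quotient.functor (idealRel (NF F))).map f ≫ e₂

/-- 2-out-of-3 property for a class of morphisms. -/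
def TwoOutOfThree {D : Type*} [Category D] (S : MorphismProperty D) : Prop :=
  (∀ {X Y Z : D} (f : X ⟶ Y) (g : Y ⟶ Z), S f → S g → S (f ≫ g)) ∧
  (∀ {X Y Z : D} (f : X ⟶ Y) (g : Y ⟶ Z), S f → S (f ≫ g) → S g) ∧
  (∀ {X Y Z : D} (f : X ⟶ Y) (g : Y ⟶ Z), S g → S (f ≫ g) → S f)

section Helpers

variable (F : MorphismProperty C)

lemma zero_mem_NF (hM0 : M0 F) : (0 : C) ∈ NF F := by
  constructor <;>
  · apply hM0.1
    rw [(isZero_zero C).eq_of_src (0 : (0:C) ⟶ (0:C)) (𝟙 _)]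
    infer_instance

lemma biprod_mem_NF (hM0 : M0 F) {N₁ N₂ : C} (h₁ : N₁ ∈ NF F) (h₂ : N₂ ∈ NF F) :
    (N₁ ⊞ N₂ : C) ∈ NF F := by
  constructor
  · have : (0 : (N₁ ⊞ N₂ : C) ⟶ (0:C)) =
        biprod.map (0 : N₁ ⟶ (0:C)) (0 : N₂ ⟶ (0:C)) ≫
          (biprod.desc (𝟙 (0:C)) (𝟙 (0:C))) := by
      apply (isZero_zero C).eq_of_tgt
    rw [this]
    apply hM0.2.1 _ _ (hM0.2.2 _ _ h₁.1 h₂.1)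
    apply hM0.1
    exact ⟨biprod.inl, by apply biprod.hom_ext' <;> apply (isZero_zero C).eq_of_src,
      by simp⟩
  · have : (0 : (0:C) ⟶ (N₁ ⊞ N₂ : C)) =
        (biprod.lift (𝟙 (0:C)) (𝟙 (0:C))) ≫
          biprod.map (0 : (0:C) ⟶ N₁) (0 : (0:C) ⟶ N₂) := by
      apply (isZero_zero C).eq_of_src
    rw [this]
    refine hM0.2.1 _ _ ?_ (hM0.2.2 _ _ h₁.2 h₂.2)
    apply hM0.1
    exact ⟨biprod.fst, by simp,
      by apply biprod.hom_ext <;> apply (isZero_zero C).eq_of_tgt⟩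

lemma ft_zero (hM0 : M0 F) {X Y : C} : FactorsThrough (NF F) (0 : X ⟶ Y) :=
  ⟨0, zero_mem_NF F hM0, 0, 0, by simp⟩

lemma ft_neg {X Y : C} {f : X ⟶ Y} (h : FactorsThrough (NF F) f) :
    FactorsThrough (NF F) (-f) := by
  obtain ⟨Z, hZ, u, v, rfl⟩ := h
  exact ⟨Z, hZ, -u, v, by simp⟩

lemma ft_add (hM0 : M0 F) {X Y : C} {f g : X ⟶ Y} (hf : FactorsThrough (NF F) f)
    (hg : FactorsThrough (NF F) g) : FactorsThrough (NF F) (f + g) := by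
  obtain ⟨Z, hZ, u, v, rfl⟩ := hf
  obtain ⟨W, hW, s, t, rfl⟩ := hg
  exact ⟨Z ⊞ W, biprod_mem_NF F hM0 hZ hW, biprod.lift u s, biprod.desc v t,
    by simp⟩

lemma congruence_idealRel (hM0 : M0 F) : Congruence (idealRel (NF F)) where
  equivalence := by
    intro X Y
    constructor
    · intro f
      simpa [idealRel] using ft_zero F hM0
    · intro f g h
      simpa [idealRel, neg_sub] using ft_neg F h
    · intro f g h h₁ h₂
      have := ft_add F hM0 h₁ h₂
      simpa [idealRel] using this
  comp_left := by
    intro X Y Z f g g' h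
    obtain ⟨W, hW, u, v, huv⟩ := h
    exact ⟨W, hW, f ≫ u, v, by rw [← Preadditive.comp_sub, huv, Category.assoc]⟩
  comp_right := by
    intro X Y Z f f' g h
    obtain ⟨W, hW, u, v, huv⟩ := h
    exact ⟨W, hW, u, v ≫ g, by rw [← Preadditive.sub_comp, huv, Category.assoc]⟩

end Helpers

section Helpers2

variable (F : MorphismProperty C)

lemma F_inl (hM0 : M0 F) {X N : C} (hN : N ∈ NF F) :
    F (biprod.inl : X ⟶ X ⊞ N) := by
  have h : (biprod.inl : X ⟶ X ⊞ N) =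
      biprod.lift (𝟙 X) (0 : X ⟶ (0:C)) ≫ biprod.map (𝟙 X) (0 : (0:C) ⟶ N) := by
    apply biprod.hom_ext <;> simp
  rw [h]
  refine hM0.2.1 _ _ (hM0.1 _ ?_) (hM0.2.2 _ _ (hM0.1 _ inferInstance) hN.2)
  exact ⟨biprod.fst, by simp, by
    apply biprod.hom_ext
    · simp
    · apply (isZero_zero C).eq_of_tgt⟩

lemma F_fst (hM0 : M0 F) {Y N : C} (hN : N ∈ NF F) :
    F (biprod.fst : Y ⊞ N ⟶ Y) := by
  have h : (biprod.fst : Y ⊞ N ⟶ Y) =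
      biprod.map (𝟙 Y) (0 : N ⟶ (0:C)) ≫ biprod.desc (𝟙 Y) (0 : (0:C) ⟶ Y) := by
    apply biprod.hom_ext' <;> simp
  rw [h]
  refine hM0.2.1 _ _ (hM0.2.2 _ _ (hM0.1 _ inferInstance) hN.1) (hM0.1 _ ?_)
  exact ⟨biprod.inl, by
    apply biprod.hom_ext'
    · simp
    · apply (isZero_zero C).eq_of_src, by simp⟩

lemma F_lift_one (hM0 : M0 F) {X N : C} (hN : N ∈ NF F) (u : X ⟶ N) :
    F (biprod.lift (𝟙 X) u) := by
  have h : biprod.lift (𝟙 X) u =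
      (biprod.inl : X ⟶ X ⊞ N) ≫
        biprod.lift biprod.fst (biprod.fst ≫ u + biprod.snd) := by
    apply biprod.hom_ext <;> simp
  rw [h]
  refine hM0.2.1 _ _ (F_inl F hM0 hN) (hM0.1 _ ?_)
  refine ⟨biprod.lift biprod.fst (-(biprod.fst ≫ u) + biprod.snd), ?_, ?_⟩ <;>
    apply biprod.hom_ext <;>
      simp [Preadditive.comp_add, Preadditive.add_comp]

lemma F_desc_one (hM0 : M0 F) {Y N : C} (hN : N ∈ NF F) (v : N ⟶ Y) :
    F (biprod.desc (𝟙 Y) v) := by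
  have h : biprod.desc (𝟙 Y) v =
      biprod.desc biprod.inl (v ≫ biprod.inl + biprod.inr) ≫
        (biprod.fst : Y ⊞ N ⟶ Y) := by
    apply biprod.hom_ext' <;> simp
  rw [h]
  refine hM0.2.1 _ _ (hM0.1 _ ?_) (F_fst F hM0 hN)
  refine ⟨biprod.desc biprod.inl (-(v ≫ biprod.inl) + biprod.inr), ?_, ?_⟩ <;>
    apply biprod.hom_ext' <;>
      simp [Preadditive.comp_add, Preadditive.add_comp]

/-- Key lemma: `F` is stable under the ideal relation. -/
lemma F_of_rel (hM0 : M0 F) {X Y : C} {f g : X ⟶ Y}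
    (h : idealRel (NF F) f g) (hg : F g) : F f := by
  obtain ⟨N, hN, u, v, huv⟩ := h
  have hf : f = biprod.lift (𝟙 X) u ≫ biprod.map g (𝟙 N) ≫ biprod.desc (𝟙 Y) v := by
    have hmd : biprod.map g (𝟙 N) ≫ biprod.desc (𝟙 Y) v = biprod.desc g v := by
      apply biprod.hom_ext' <;> simp
    rw [hmd, biprod.lift_desc, Category.id_comp, ← huv]
    abel
  rw [hf]
  exact hM0.2.1 _ _ (F_lift_one F hM0 hN u)
    (hM0.2.1 _ _ (hM0.2.2 _ _ hg (hM0.1 _ inferInstance)) (F_desc_one F hM0 hN v))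

end Helpers2

section Main

variable (F : MorphismProperty C)

local notation "q" => CategoryTheory.Quotient.functor (idealRel (NF F))

lemma four_to_three (hM0 : M0 F)
    (h4 : ∀ {X Y : C} (f : X ⟶ Y), IsSplitMono f →
      IsIso ((q).map f) → F f)
    {X Y : C} (f : X ⟶ Y) (hf : IsIso ((q).map f)) : F f := by
  haveI := congruence_idealRel F hM0
  obtain ⟨g, hg⟩ := (q).map_surjective (inv ((q).map f))
  have h1 : idealRel (NF F) (f ≫ g) (𝟙 X) := by
    refine (CategoryTheory.Quotient.functor_map_eq_iff
      (idealRel (NF F)) _ _).mp ?_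
    simp [hg]
  have h2 : idealRel (NF F) (g ≫ f) (𝟙 Y) := by
    refine (CategoryTheory.Quotient.functor_map_eq_iff
      (idealRel (NF F)) _ _).mp ?_
    simp [hg]
  obtain ⟨N, hN, u, v, huv⟩ := h1
  obtain ⟨N', hN', u', v', huv'⟩ := h2
  have hfg : f ≫ g = 𝟙 X + u ≫ v := by rw [← huv]; abel
  have hgf : g ≫ f = 𝟙 Y + u' ≫ v' := by rw [← huv']; abel
  set s : X ⟶ Y ⊞ N := biprod.lift f u with hs
  have hsm : IsSplitMono s := IsSplitMono.mk' ⟨biprod.desc g (-v), by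
    simp [hs, biprod.lift_desc, Preadditive.comp_neg, hfg]⟩
  have hiso : IsIso ((q).map s) := by
    refine ⟨(q).map (biprod.desc g 0), ?_, ?_⟩
    · rw [← Functor.map_comp, ← CategoryTheory.Functor.map_id,
        CategoryTheory.Quotient.functor_map_eq_iff]
      have hst : s ≫ biprod.desc g 0 = f ≫ g := by
        simp [hs, biprod.lift_desc]
      rw [hst]
      exact ⟨N, hN, u, v, huv⟩
    · rw [← Functor.map_comp, ← CategoryTheory.Functor.map_id,
        CategoryTheory.Quotient.functor_map_eq_iff]
      have hδ : biprod.desc g 0 ≫ s - 𝟙 (Y ⊞ N) =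
          (biprod.fst ≫ u') ≫ (v' ≫ biprod.inl) +
            (biprod.fst ≫ g ≫ u - biprod.snd) ≫ biprod.inr := by
        apply biprod.hom_ext' <;> apply biprod.hom_ext <;>
          simp [hs, hgf, Preadditive.add_comp, Preadditive.comp_add,
            Preadditive.sub_comp, Preadditive.comp_sub]
      show FactorsThrough (NF F) _
      rw [hδ]
      exact ft_add F hM0 ⟨N', hN', _, _, rfl⟩ ⟨N, hN, _, _, rfl⟩
  have hFs : F s := h4 s hsm hiso
  have hf' : f = s ≫ biprod.fst := by simp [hs]
  rw [hf']
  exact hM0.2.1 _ _ hFs (F_fst F hM0 hN)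

lemma five_to_three (hM0 : M0 F)
    (h5 : ∀ {X Y : C} (f : X ⟶ Y), IsSplitEpi f →
      IsIso ((q).map f) → F f)
    {X Y : C} (f : X ⟶ Y) (hf : IsIso ((q).map f)) : F f := by
  haveI := congruence_idealRel F hM0
  obtain ⟨g, hg⟩ := (q).map_surjective (inv ((q).map f))
  have h1 : idealRel (NF F) (f ≫ g) (𝟙 X) := by
    refine (CategoryTheory.Quotient.functor_map_eq_iff
      (idealRel (NF F)) _ _).mp ?_
    simp [hg]
  have h2 : idealRel (NF F) (g ≫ f) (𝟙 Y) := by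
    refine (CategoryTheory.Quotient.functor_map_eq_iff
      (idealRel (NF F)) _ _).mp ?_
    simp [hg]
  obtain ⟨N, hN, u, v, huv⟩ := h1
  obtain ⟨N', hN', u', v', huv'⟩ := h2
  have hfg : f ≫ g = 𝟙 X + u ≫ v := by rw [← huv]; abel
  have hgf : g ≫ f = 𝟙 Y + u' ≫ v' := by rw [← huv']; abel
  set r : X ⊞ N' ⟶ Y := biprod.desc f v' with hr
  have hse : IsSplitEpi r := IsSplitEpi.mk' ⟨biprod.lift g (-u'), by
    simp [hr, biprod.lift_desc, Preadditive.neg_comp, hgf]⟩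
  have hiso : IsIso ((q).map r) := by
    refine ⟨(q).map (biprod.lift g 0), ?_, ?_⟩
    · rw [← Functor.map_comp, ← CategoryTheory.Functor.map_id,
        CategoryTheory.Quotient.functor_map_eq_iff]
      have hδ : r ≫ biprod.lift g 0 - 𝟙 (X ⊞ N') =
          (biprod.fst ≫ u) ≫ (v ≫ biprod.inl) +
            biprod.snd ≫ (biprod.lift (v' ≫ g) 0 - biprod.inr) := by
        apply biprod.hom_ext' <;> apply biprod.hom_ext <;>
          simp [hr, hfg, Preadditive.add_comp, Preadditive.comp_add,
            Preadditive.sub_comp, Preadditive.comp_sub]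
      show FactorsThrough (NF F) _
      rw [hδ]
      exact ft_add F hM0 ⟨N, hN, _, _, rfl⟩ ⟨N', hN', _, _, rfl⟩
    · rw [← Functor.map_comp, ← CategoryTheory.Functor.map_id,
        CategoryTheory.Quotient.functor_map_eq_iff]
      have hst : biprod.lift g 0 ≫ r = g ≫ f := by
        simp [hr]
      rw [hst]
      exact ⟨N', hN', u', v', huv'⟩
  have hFr : F r := h5 r hse hiso
  have hf' : f = biprod.inl ≫ r := by simp [hr]
  rw [hf']
  exact hM0.2.1 _ _ (F_inl F hM0 hN') hFr

end Main

section Main2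

variable (F : MorphismProperty C)

local notation "q" => CategoryTheory.Quotient.functor (idealRel (NF F))

lemma Fbar_of_F (hM0 : M0 F) {X Y : C} (f : X ⟶ Y) (hf : F f) :
    Fbar F ((q).map f) :=
  ⟨X, Y, 𝟙 _, 𝟙 _, f, inferInstance, inferInstance, hf, by simp⟩

lemma three_to_two (hM0 : M0 F)
    (h3 : ∀ {X Y : C} (f : X ⟶ Y), IsIso ((q).map f) → F f)
    {X Y : C} (f : X ⟶ Y) : Fbar F ((q).map f) ↔ F f := by
  haveI := congruence_idealRel F hM0
  constructor
  · rintro ⟨A, B, e₁, e₂, f', he₁, he₂, hf', heq⟩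
    obtain ⟨a, ha⟩ := (q).map_surjective e₁
    obtain ⟨b, hb⟩ := (q).map_surjective e₂
    have hFa : F a := h3 a (by rw [ha]; exact he₁)
    have hFb : F b := h3 b (by rw [hb]; exact he₂)
    have heq2 : (q).map f = (q).map (a ≫ f' ≫ b) := by
      rw [Functor.map_comp, Functor.map_comp, ha, hb, heq]
    exact F_of_rel F hM0
      ((CategoryTheory.Quotient.functor_map_eq_iff (idealRel (NF F)) _ _).mp heq2)
      (hM0.2.1 _ _ hFa (hM0.2.1 _ _ hf' hFb))
  · exact Fbar_of_F F hM0 f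

lemma two_to_three (hM0 : M0 F)
    (h2 : ∀ {X Y : C} (f : X ⟶ Y), Fbar F ((q).map f) ↔ F f)
    {X Y : C} (f : X ⟶ Y) (hf : IsIso ((q).map f)) : F f := by
  refine (h2 f).mp ⟨X, X, 𝟙 _, (q).map f, 𝟙 X, inferInstance, hf,
    hM0.1 _ inferInstance, by simp⟩

end Main2

/-- For `F` satisfying (M0), with `p : C ⟶ C/[N_F]` the ideal quotient functor
and `F̄` the isomorphism-closure of `p(F)`, the following are equivalent:
(i) `p(F) = F̄`; (ii) `p⁻¹(F̄) = F`; (iii) `p⁻¹(Iso(C/[N_F])) ⊆ F`;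
(iv) every split monomorphism whose image under `p` is an isomorphism lies in
`F`; (v) every split epimorphism whose image under `p` is an isomorphism lies
in `F`. -/
theorem F_saturation_tfae (F : MorphismProperty C) (hM0 : M0 F) :
    List.TFAE
      [ (fun X Y (h : X ⟶ Y) => ∃ (A B : C)
          (hA : X = (CategoryTheory.Quotient.functor (idealRel (NF F))).obj A)
          (hB : (CategoryTheory.Quotient.functor (idealRel (NF F))).obj B = Y)
          (f : A ⟶ B), F f ∧
            h = eqToHom hA ≫
              (CategoryTheory.Quotient.functor (idealRel (NF F))).map f ≫ eqToHom hB :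
          MorphismProperty (CategoryTheory.Quotient (idealRel (NF F)))) = Fbar F,
        ∀ {X Y : C} (f : X ⟶ Y),
          Fbar F ((CategoryTheory.Quotient.functor (idealRel (NF F))).map f) ↔ F f,
        ∀ {X Y : C} (f : X ⟶ Y),
          IsIso ((CategoryTheory.Quotient.functor (idealRel (NF F))).map f) → F f,
        ∀ {X Y : C} (f : X ⟶ Y), IsSplitMono f →
          IsIso ((CategoryTheory.Quotient.functor (idealRel (NF F))).map f) → F f,
        ∀ {X Y : C} (f : X ⟶ Y), IsSplitEpi f →
          IsIso ((CategoryTheory.Quotient.functor (idealRel (NF F))).map f) → F f ] := by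
  haveI := congruence_idealRel F hM0
  tfae_have 1 → 2 := by
    intro h1 X Y f
    constructor
    · intro hbar
      rw [← h1] at hbar
      obtain ⟨A, B, hA, hB, f', hf', heq⟩ := hbar
      obtain rfl : X = A := congrArg CategoryTheory.Quotient.as hA
      obtain rfl : B = Y := congrArg CategoryTheory.Quotient.as hB
      simp only [eqToHom_refl, Category.id_comp, Category.comp_id] at heq
      exact F_of_rel F hM0
        ((CategoryTheory.Quotient.functor_map_eq_iff (idealRel (NF F)) _ _).mp heq)
        hf'
    · exact Fbar_of_F F hM0 f
  tfae_have 2 → 1 := by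
    intro h2
    funext X Y h
    ext
    constructor
    · rintro ⟨A, B, hA, hB, f, hf, heq⟩
      exact ⟨A, B, eqToHom hA, eqToHom hB, f, inferInstance, inferInstance, hf, heq⟩
    · intro hbar
      obtain ⟨c, hc⟩ := (CategoryTheory.Quotient.functor (idealRel (NF F))).map_surjective (show (CategoryTheory.Quotient.functor (idealRel (NF F))).obj X.as ⟶ (CategoryTheory.Quotient.functor (idealRel (NF F))).obj Y.as from h)
      have hFc : F c := (h2 c).mp (by rw [hc]; exact hbar)
      exact ⟨X.as, Y.as, rfl, rfl, c, hFc, by simp [hc]⟩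
  tfae_have 2 → 3 := fun h2 _ _ f hf => two_to_three F hM0 @h2 f hf
  tfae_have 3 → 2 := fun h3 _ _ f => three_to_two F hM0 @h3 f
  tfae_have 3 → 4 := fun h3 _ _ f _ hf => h3 f hf
  tfae_have 3 → 5 := fun h3 _ _ f _ hf => h3 f hf
  tfae_have 4 → 3 := fun h4 _ _ f hf => four_to_three F hM0 @h4 f hf
  tfae_have 5 → 3 := fun h5 _ _ f hf => five_to_three F hM0 @h5 f hf
  tfae_finish
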